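/- Let f : [0,1] → [0,∞) be a probability density on [0,1] and let s : [0,1] → [0,1] be measurable with ∫₀¹ s(x) f(x) dx > 0. If for every measurable selection function s with positive selection probability and every t ∈ [0,1] we have (∫₀ᵗ s f)/(∫₀¹ s f) ≤ (∫₀ᵗ s)/(∫₀¹ s), and f is continuous on [0,1], then f is non-decreasing on [0,1]. -/

import Mathlib

open MeasureTheory Set

/-- Converse: if the selective dominance inequality holds for all
selection functions, a continuous density must be non-decreasing. -/
theorem monotone_density_of_selective_dominance
    (f : ℝ → ℝ)
    (hf_nonneg : ∀ x ∈ Set.Icc (0:ℝ) 1, 0 ≤ f x)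
    (hf_int : IntervalIntegrable f volume 0 1)
    (hf_dens : ∫ x in (0:ℝ)..1, f x = 1)
    (hf_cont : ContinuousOn f (Set.Icc (0:ℝ) 1))
    (hdom : ∀ s : ℝ → ℝ, Measurable s → (∀ x ∈ Set.Icc (0:ℝ) 1, s x ∈ Set.Icc (0:ℝ) 1) →
      0 < ∫ x in (0:ℝ)..1, s x * f x →
      ∀ t ∈ Set.Icc (0:ℝ) 1,
        (∫ x in (0:ℝ)..t, s x * f x) / (∫ x in (0:ℝ)..1, s x * f x)
          ≤ (∫ x in (0:ℝ)..t, s x) / (∫ x in (0:ℝ)..1, s x)) :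
    MonotoneOn f (Set.Icc (0:ℝ) 1) := by
  intro u hu v hv huv
  by_contra hlt
  push_neg at hlt
  have huv' : u < v := lt_of_le_of_ne huv (by rintro rfl; exact lt_irrefl _ hlt)
  obtain ⟨hu0, hu1⟩ := hu
  obtain ⟨hv0, hv1⟩ := hv
  set δ : ℝ := (f u - f v) / 4 with hδdef
  have hδ : 0 < δ := by simp only [hδdef]; linarith
  obtain ⟨ε₁, hε₁, h1⟩ := Metric.continuousWithinAt_iff.mp (hf_cont u ⟨hu0, hu1⟩) δ hδ
  obtain ⟨ε₂, hε₂, h2⟩ := Metric.continuousWithinAt_iff.mp (hf_cont v ⟨hv0, hv1⟩) δ hδ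
  set ε : ℝ := min (min ε₁ ε₂ / 2) ((v - u) / 4) with hεdef
  have hmin12 : 0 < min ε₁ ε₂ := lt_min hε₁ hε₂
  have hε : 0 < ε := lt_min (by linarith) (by linarith)
  have hεε₁ : ε < ε₁ := by
    have h1' : ε ≤ min ε₁ ε₂ / 2 := min_le_left _ _
    have h2' : min ε₁ ε₂ ≤ ε₁ := min_le_left _ _
    linarith
  have hεε₂ : ε < ε₂ := by
    have h1' : ε ≤ min ε₁ ε₂ / 2 := min_le_left _ _
    have h2' : min ε₁ ε₂ ≤ ε₂ := min_le_right _ _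
    linarith
  have hεuv : ε ≤ (v - u) / 4 := min_le_right _ _
  set t : ℝ := (u + v) / 2 with htdef
  have hut : u + ε < t := by simp only [htdef]; linarith
  have htv : t < v - ε := by simp only [htdef]; linarith
  have ht0 : 0 ≤ t := by simp only [htdef]; linarith
  have ht1 : t ≤ 1 := by simp only [htdef]; linarith
  set S1 : Set ℝ := Set.Ioc u (u + ε) with hS1def
  set S2 : Set ℝ := Set.Ioc (v - ε) v with hS2def
  set S : Set ℝ := S1 ∪ S2 with hSdef
  have hS1m : MeasurableSet S1 := measurableSet_Ioc
  have hS2m : MeasurableSet S2 := measurableSet_Ioc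
  have hSm : MeasurableSet S := hS1m.union hS2m
  have hdisj : Disjoint S1 S2 := by
    apply Set.disjoint_left.mpr
    intro x hx1 hx2
    simp only [hS1def, hS2def, Set.mem_Ioc] at hx1 hx2
    linarith
  set s : ℝ → ℝ := S.indicator (fun _ => 1) with hsdef
  have hsmeas : Measurable s := measurable_const.indicator hSm
  have hsrange : ∀ x ∈ Set.Icc (0:ℝ) 1, s x ∈ Set.Icc (0:ℝ) 1 := by
    intro x _
    simp only [hsdef, Set.indicator_apply]
    split_ifs <;> norm_num
  have hsf : ∀ x, s x * f x = S.indicator f x := by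
    intro x
    by_cases h : x ∈ S
    · simp [hsdef, Set.indicator_of_mem h]
    · simp [hsdef, Set.indicator_of_notMem h]
  -- integrability
  have hInt : IntegrableOn f (Set.Ioc (0:ℝ) 1) := hf_int.1
  have hS1sub : S1 ⊆ Set.Ioc (0:ℝ) 1 := by
    intro x hx
    simp only [hS1def, Set.mem_Ioc] at hx ⊢
    constructor <;> linarith
  have hS2sub : S2 ⊆ Set.Ioc (0:ℝ) 1 := by
    intro x hx
    simp only [hS2def, Set.mem_Ioc] at hx ⊢
    constructor <;> linarith
  have hIntS1 : IntegrableOn f S1 := hInt.mono_set hS1sub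
  have hIntS2 : IntegrableOn f S2 := hInt.mono_set hS2sub
  set A : ℝ := ∫ x in S1, f x with hAdef
  set B : ℝ := ∫ x in S2, f x with hBdef
  have hvolS1 : volume S1 = ENNReal.ofReal ε := by
    simp [hS1def, Real.volume_Ioc]
  have hvolS2 : volume S2 = ENNReal.ofReal ε := by
    simp [hS2def, Real.volume_Ioc]
  -- pointwise bounds
  have hlbS1 : ∀ x ∈ S1, f u - δ ≤ f x := by
    intro x hx
    simp only [hS1def, Set.mem_Ioc] at hx
    have hxIcc : x ∈ Set.Icc (0:ℝ) 1 := ⟨by linarith, by linarith⟩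
    have hdist : dist x u < ε₁ := by
      rw [Real.dist_eq, abs_lt]; constructor <;> linarith
    have := h1 hxIcc hdist
    rw [Real.dist_eq, abs_lt] at this
    linarith
  have hubS2 : ∀ x ∈ S2, f x ≤ f v + δ := by
    intro x hx
    simp only [hS2def, Set.mem_Ioc] at hx
    have hxIcc : x ∈ Set.Icc (0:ℝ) 1 := ⟨by linarith, by linarith⟩
    have hdist : dist x v < ε₂ := by
      rw [Real.dist_eq, abs_lt]; constructor <;> linarith
    have := h2 hxIcc hdist
    rw [Real.dist_eq, abs_lt] at this
    linarith
  have hconstS1 : IntegrableOn (fun _ : ℝ => f u - δ) S1 := by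
    apply (integrableOn_const_iff (C := f u - δ)).mpr
    exact Or.inr (hvolS1 ▸ ENNReal.ofReal_lt_top)
  have hconstS2 : IntegrableOn (fun _ : ℝ => f v + δ) S2 := by
    apply (integrableOn_const_iff (C := f v + δ)).mpr
    exact Or.inr (hvolS2 ▸ ENNReal.ofReal_lt_top)
  have hAlb : ε * (f u - δ) ≤ A := by
    have h := setIntegral_mono_on hconstS1 hIntS1 hS1m hlbS1
    rwa [setIntegral_const, measureReal_def, hvolS1, ENNReal.toReal_ofReal hε.le, smul_eq_mul] at h
  have hBub : B ≤ ε * (f v + δ) := by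
    have h := setIntegral_mono_on hIntS2 hconstS2 hS2m hubS2
    rwa [setIntegral_const, measureReal_def, hvolS2, ENNReal.toReal_ofReal hε.le, smul_eq_mul] at h
  have hBnn : 0 ≤ B := by
    apply setIntegral_nonneg hS2m
    intro x hx
    exact hf_nonneg x ⟨(hS2sub hx).1.le, (hS2sub hx).2⟩
  have hfv0 : 0 ≤ f v := hf_nonneg v ⟨hv0, hv1⟩
  have hApos : 0 < A := lt_of_lt_of_le (by simp only [hδdef]; nlinarith) hAlb
  -- integral computations
  have econv : ∀ c : ℝ, 0 ≤ c → ∫ x in (0:ℝ)..c, s x * f x = ∫ x in Set.Ioc 0 c ∩ S, f x := by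
    intro c hc
    rw [intervalIntegral.integral_of_le hc]
    simp_rw [hsf]
    rw [setIntegral_indicator hSm]
  have econv' : ∀ c : ℝ, 0 ≤ c → ∫ x in (0:ℝ)..c, s x = ∫ x in Set.Ioc 0 c ∩ S, (1:ℝ) := by
    intro c hc
    rw [intervalIntegral.integral_of_le hc]
    simp only [hsdef]
    rw [setIntegral_indicator hSm]
  have hcap1 : Set.Ioc (0:ℝ) 1 ∩ S = S := by
    apply Set.inter_eq_self_of_subset_right
    exact Set.union_subset hS1sub hS2sub
  have hcapt : Set.Ioc (0:ℝ) t ∩ S = S1 := by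
    ext x
    simp only [hSdef, hS1def, hS2def, Set.mem_inter_iff, Set.mem_union, Set.mem_Ioc]
    constructor
    · rintro ⟨⟨hx0, hxt⟩, h | h⟩
      · exact h
      · exfalso; linarith [h.1]
    · rintro ⟨hxu, hxε⟩
      exact ⟨⟨by linarith, by linarith⟩, Or.inl ⟨hxu, hxε⟩⟩
  have eSf : ∫ x in (0:ℝ)..1, s x * f x = A + B := by
    rw [econv 1 (by norm_num), hcap1, hSdef,
      setIntegral_union hdisj hS2m hIntS1 hIntS2]
  have etf : ∫ x in (0:ℝ)..t, s x * f x = A := by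
    rw [econv t ht0, hcapt]
  have hconst1S1 : IntegrableOn (fun _ : ℝ => (1:ℝ)) S1 := by
    apply (integrableOn_const_iff (C := (1:ℝ))).mpr
    exact Or.inr (hvolS1 ▸ ENNReal.ofReal_lt_top)
  have hconst1S2 : IntegrableOn (fun _ : ℝ => (1:ℝ)) S2 := by
    apply (integrableOn_const_iff (C := (1:ℝ))).mpr
    exact Or.inr (hvolS2 ▸ ENNReal.ofReal_lt_top)
  have evolS1 : ∫ x in S1, (1:ℝ) = ε := by
    rw [setIntegral_const, measureReal_def, hvolS1, ENNReal.toReal_ofReal hε.le, smul_eq_mul, mul_one]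
  have evolS2 : ∫ x in S2, (1:ℝ) = ε := by
    rw [setIntegral_const, measureReal_def, hvolS2, ENNReal.toReal_ofReal hε.le, smul_eq_mul, mul_one]
  have eS1 : ∫ x in (0:ℝ)..1, s x = 2 * ε := by
    rw [econv' 1 (by norm_num), hcap1, hSdef,
      setIntegral_union hdisj hS2m hconst1S1 hconst1S2, evolS1, evolS2]
    ring
  have etS : ∫ x in (0:ℝ)..t, s x = ε := by
    rw [econv' t ht0, hcapt, evolS1]
  -- apply dominance
  have hpos : 0 < ∫ x in (0:ℝ)..1, s x * f x := by rw [eSf]; linarith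
  have hd := hdom s hsmeas hsrange hpos t ⟨ht0, ht1⟩
  rw [eSf, etf, eS1, etS] at hd
  have hεne : ε / (2 * ε) = 1 / 2 := by
    field_simp
  rw [hεne] at hd
  have hAB : A ≤ B := by
    rw [div_le_div_iff₀ (by linarith) (by norm_num)] at hd
    linarith
  have : ε * (f u - δ) ≤ ε * (f v + δ) := le_trans hAlb (le_trans hAB hBub)
  have hineq : f u - δ ≤ f v + δ := le_of_mul_le_mul_left (by linarith [this]) hε
  simp only [hδdef] at hineq
  linarith
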